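/- Let f, g : I → ℝ be strictly increasing and m < n in ℕ. If A_f^{[n]}(x) ≤ A_g^{[n]}(x) for all x ∈ Iⁿ, then A_f^{[m]}(y) ≤ A_g^{[m]}(y) for all y ∈ Iᵐ. -/

import Mathlib

open Set Filter Topology

/-- `finv` is the generalized inverse of the strictly increasing function `f : I → ℝ`:
an increasing continuous left inverse of `f` mapping `conv (f '' I)` into `I`. -/
def IsGenInv (I : Set ℝ) (f finv : ℝ → ℝ) : Prop :=
  MonotoneOn finv (convexHull ℝ (f '' I)) ∧
  ContinuousOn finv (convexHull ℝ (f '' I)) ∧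
  Set.MapsTo finv (convexHull ℝ (f '' I)) I ∧
  ∀ x ∈ I, finv (f x) = x

/-- The `n`-variable generalized quasiarithmetic mean `A_f^{[n]}` generated by `f`,
where `finv` is the generalized inverse of `f`. -/
noncomputable def qam (finv f : ℝ → ℝ) (n : ℕ) (x : Fin n → ℝ) : ℝ :=
  finv ((∑ i, f (x i)) / n)

lemma pad_sum (m n : ℕ) (hmn : m ≤ n) (Y : ℕ → ℝ) :
    ∑ i : Fin n, Y i = ∑ i ∈ Finset.range m, Y i + ∑ i ∈ Finset.Ico m n, Y i := by
  rw [Fin.sum_univ_eq_sum_range Y n, Finset.range_eq_Ico, Finset.range_eq_Ico]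
  exact (Finset.sum_Ico_consecutive Y (Nat.zero_le m) hmn).symm

lemma avg_mem_hull {I : Set ℝ} {f : ℝ → ℝ} {m : ℕ} (hm : 0 < m)
    (y : Fin m → ℝ) (hy : ∀ i, y i ∈ I) :
    (∑ i, f (y i)) / m ∈ convexHull ℝ (f '' I) := by
  have hm' : (0:ℝ) < m := by exact_mod_cast hm
  have h := (convex_convexHull ℝ (f '' I)).sum_mem (t := Finset.univ)
    (w := fun _ : Fin m => (m : ℝ)⁻¹) (z := fun i => f (y i))
    (fun i _ => by positivity)
    (by simp [Finset.sum_const, Finset.card_univ]; field_simp)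
    (fun i _ => subset_convexHull ℝ (f '' I) ⟨y i, hy i, rfl⟩)
  have : ∑ i : Fin m, (m:ℝ)⁻¹ • f (y i) = (∑ i, f (y i)) / m := by
    simp only [smul_eq_mul, ← Finset.mul_sum]
    ring
  rwa [this] at h

/-- comparison of `n`-variable generalized quasiarithmetic means implies the
comparison of the `m`-variable ones for `m < n`. -/
theorem stmt15 (I : Set ℝ) (hIo : IsOpen I) (hIc : I.OrdConnected) (hne : I.Nonempty)
    (f g finvf finvg : ℝ → ℝ) (hf : StrictMonoOn f I) (hg : StrictMonoOn g I)
    (hinvf : IsGenInv I f finvf) (hinvg : IsGenInv I g finvg)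
    (m n : ℕ) (hm : 0 < m) (hmn : m < n)
    (hcomp : ∀ x : Fin n → ℝ, (∀ i, x i ∈ I) → qam finvf f n x ≤ qam finvg g n x) :
    ∀ y : Fin m → ℝ, (∀ i, y i ∈ I) → qam finvf f m y ≤ qam finvg g m y := by
  obtain ⟨hfmono, hfcont, hfmaps, hfleft⟩ := hinvf
  obtain ⟨hgmono, hgcont, hgmaps, hgleft⟩ := hinvg
  intro y hy
  have hn : 0 < n := lt_trans hm hmn
  have hn' : (0:ℝ) < n := by exact_mod_cast hn
  have hm' : (0:ℝ) < m := by exact_mod_cast hm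
  set Hf := convexHull ℝ (f '' I) with hHf
  set Hg := convexHull ℝ (g '' I) with hHg
  set Sf := ∑ i, f (y i) with hSfdef
  set Sg := ∑ i, g (y i) with hSgdef
  have hsf : Sf / m ∈ Hf := avg_mem_hull hm y hy
  have hsg : Sg / m ∈ Hg := avg_mem_hull hm y hy
  set a := finvf (Sf / m) with ha
  set b := finvg (Sg / m) with hb
  have haI : a ∈ I := hfmaps hsf
  have hbI : b ∈ I := hgmaps hsg
  show finvf ((∑ i, f (y i)) / m) ≤ finvg ((∑ i, g (y i)) / m)
  rw [← hSfdef, ← hSgdef, ← ha, ← hb]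
  by_contra hab
  push_neg at hab  -- hab : b < a
  -- the real weight of the padding block
  set c : ℝ := ((n - m : ℕ) : ℝ) with hcdef
  have hc : c = (n : ℝ) - m := by rw [hcdef]; exact_mod_cast Nat.cast_sub hmn.le
  have hc0 : 0 < c := by
    rw [hc]
    have h : (m:ℝ) < n := by exact_mod_cast hmn
    linarith
  set r : ℝ := c / n with hrdef
  have hr0 : 0 < r := by positivity
  have hr1 : r < 1 := by rw [hrdef, div_lt_one hn', hc]; linarith
  -- padded tuples
  set Y : ℝ → ℕ → ℝ := fun t k => if h : k < m then y ⟨k, h⟩ else t with hY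
  set X : ℝ → Fin n → ℝ := fun t i => Y t i with hX
  have hXI : ∀ t ∈ I, ∀ i : Fin n, X t i ∈ I := by
    intro t ht i
    simp only [hX, hY]
    split
    · exact hy _
    · exact ht
  have hsum : ∀ (φ : ℝ → ℝ) (t : ℝ),
      (∑ i : Fin n, φ (X t i)) = (∑ j : Fin m, φ (y j)) + c * φ t := by
    intro φ t
    have h1 : ∑ i : Fin n, φ (X t i) =
        ∑ i ∈ Finset.range m, φ (Y t i) + ∑ i ∈ Finset.Ico m n, φ (Y t i) :=
      pad_sum m n hmn.le (fun k => φ (Y t k))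
    have h2 : ∑ i ∈ Finset.range m, φ (Y t i) = ∑ j : Fin m, φ (y j) := by
      rw [← Fin.sum_univ_eq_sum_range (fun k => φ (Y t k)) m]
      refine Finset.sum_congr rfl fun j _ => ?_
      simp only [hY]
      rw [dif_pos j.isLt]
    have h3 : ∑ i ∈ Finset.Ico m n, φ (Y t i) = c * φ t := by
      rw [Finset.sum_congr rfl (fun i hi => ?_), Finset.sum_const, Nat.card_Ico,
        nsmul_eq_mul, hcdef]
      · simp only [hY]
        rw [dif_neg (by simpa using (Finset.mem_Ico.mp hi).1 : ¬ _)]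
    rw [h1, h2, h3]
  -- hull membership of the padded means
  have hcomb_mem : ∀ (φ : ℝ → ℝ) (S : ℝ) (t : ℝ), S / m ∈ convexHull ℝ (φ '' I) → t ∈ I →
      (S + c * φ t) / n ∈ convexHull ℝ (φ '' I) := by
    intro φ S t hS ht
    have hφt : φ t ∈ convexHull ℝ (φ '' I) := subset_convexHull ℝ (φ '' I) ⟨t, ht, rfl⟩
    have hmem := (convex_convexHull ℝ (φ '' I)) hS hφt
      (le_of_lt (by positivity : (0:ℝ) < (m:ℝ)/n)) hr0.le
      (by rw [hrdef, hc]; field_simp; ring)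
    have : ((m:ℝ)/n) • (S / m) + r • φ t = (S + c * φ t) / n := by
      rw [smul_eq_mul, smul_eq_mul, hrdef]
      field_simp
    rwa [this] at hmem
  have hft_mem : ∀ t ∈ I, f t ∈ Hf := fun t ht => subset_convexHull ℝ (f '' I) ⟨t, ht, rfl⟩
  have hgt_mem : ∀ t ∈ I, g t ∈ Hg := fun t ht => subset_convexHull ℝ (g '' I) ⟨t, ht, rfl⟩
  -- main step: for t' ∈ (b, a] ∩ I, the padded g-mean is ≥ t'
  have step : ∀ t' ∈ I, t' ≤ a → t' ≤ finvg ((Sg + c * g t') / n) := by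
    intro t' ht' hta
    have hcombf : (Sf + c * f t') / n ∈ Hf := hcomb_mem f Sf t' hsf ht'
    have hcombg : (Sg + c * g t') / n ∈ Hg := hcomb_mem g Sg t' hsg ht'
    have hcmp := hcomp (X t') (hXI t' ht')
    rw [qam, qam, hsum f t', hsum g t', ← hSfdef, ← hSgdef] at hcmp
    -- lower bound for the f-side
    have hlow : t' ≤ finvf ((Sf + c * f t') / n) := by
      rcases le_or_gt (Sf / m) (f t') with hcase | hcase
      · have harg : Sf / m ≤ (Sf + c * f t') / n := by
          have h3 : (Sf + c * f t') / n = Sf / m + c * (f t' - Sf / m) / n := by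
            rw [hc]; field_simp; ring
          have h4 : (0:ℝ) ≤ c * (f t' - Sf / m) / n :=
            div_nonneg (mul_nonneg hc0.le (by linarith)) hn'.le
          linarith
        calc t' ≤ a := hta
          _ ≤ finvf ((Sf + c * f t') / n) := hfmono hsf hcombf harg
      · have harg : f t' ≤ (Sf + c * f t') / n := by
          have h1 : f t' * m < Sf := (lt_div_iff₀ hm').mp hcase
          have h3 : (Sf + c * f t') / n = f t' + (Sf - m * f t') / n := by
            rw [hc]; field_simp; ring
          have h4 : (0:ℝ) ≤ (Sf - m * f t') / n := div_nonneg (by nlinarith) hn'.le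
          linarith
        calc t' = finvf (f t') := (hfleft t' ht').symm
          _ ≤ finvf ((Sf + c * f t') / n) := hfmono (hft_mem t' ht') hcombf harg
    linarith
  -- key strict inequality for pairs
  have keyrel : ∀ t ∈ I, ∀ t' ∈ I, b < t → t < t' → t' ≤ a →
      g t - Sg / m < r * (g t' - Sg / m) := by
    intro t ht t' ht' hbt htt' hta
    have h1 : t' ≤ finvg ((Sg + c * g t') / n) := step t' ht' hta
    have hcombg : (Sg + c * g t') / n ∈ Hg := hcomb_mem g Sg t' hsg ht'
    have h2 : g t < (Sg + c * g t') / n := by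
      by_contra hle
      push_neg at hle
      have := hgmono hcombg (hgt_mem t ht) hle
      rw [hgleft t ht] at this
      linarith
    have heq : (Sg + c * g t') / n = Sg / m + r * (g t' - Sg / m) := by
      rw [hrdef, hc]
      field_simp
      ring
    linarith [heq ▸ h2]
  -- positivity of F t = g t - Sg/m for t > b
  have hFpos : ∀ t ∈ I, b < t → 0 < g t - Sg / m := by
    intro t ht hbt
    by_contra hle
    push_neg at hle
    have := hgmono (hgt_mem t ht) hsg (by linarith)
    rw [hgleft t ht] at this
    linarith
  -- the chain estimate
  have chain : ∀ k : ℕ, ∀ t ∈ I, ∀ t' ∈ I, b < t → t < t' → t' ≤ a →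
      g t - Sg / m ≤ r ^ k * (g t' - Sg / m) := by
    intro k
    induction k with
    | zero =>
      intro t ht t' ht' hbt htt' hta
      simp only [pow_zero, one_mul]
      have := hg ht ht' htt'
      linarith
    | succ k ih =>
      intro t ht t' ht' hbt htt' hta
      set u : ℝ := (t + t') / 2 with hu
      have huI : u ∈ I := hIc.out ht ht' ⟨by rw [hu]; linarith, by rw [hu]; linarith⟩
      have htu : t < u := by rw [hu]; linarith
      have hut : u < t' := by rw [hu]; linarith
      have h1 : g t - Sg / m < r * (g u - Sg / m) :=
        keyrel t ht u huI hbt htu (by linarith)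
      have h2 : g u - Sg / m ≤ r ^ k * (g t' - Sg / m) := ih u huI t' ht' (by linarith) hut hta
      calc g t - Sg / m ≤ r * (g u - Sg / m) := h1.le
        _ ≤ r * (r ^ k * (g t' - Sg / m)) := by nlinarith
        _ = r ^ (k + 1) * (g t' - Sg / m) := by ring
  -- derive the contradiction
  set t₀ : ℝ := (a + b) / 2 with ht₀
  have hbt₀ : b < t₀ := by rw [ht₀]; linarith
  have ht₀a : t₀ < a := by rw [ht₀]; linarith
  have ht₀I : t₀ ∈ I := hIc.out hbI haI ⟨by linarith, by linarith⟩
  have hF0 : 0 < g t₀ - Sg / m := hFpos t₀ ht₀I hbt₀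
  have hFa : 0 < g a - Sg / m := hFpos a haI hab
  obtain ⟨k, hk⟩ := exists_pow_lt_of_lt_one (div_pos hF0 hFa) hr1
  have hchain := chain k t₀ ht₀I a haI hbt₀ ht₀a le_rfl
  have : r ^ k * (g a - Sg / m) < g t₀ - Sg / m := by
    rw [← lt_div_iff₀ hFa]
    exact hk
  linarith
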